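/- For every ℓ ≥ 1, the number of subgroups of ℤ^ℓ of index p^m (p prime, m ≥ 1) equals ((p^ℓ - 1)(p^{ℓ+1} - 1)⋯(p^{ℓ+m-1} - 1)) / ((p - 1)(p^2 - 1)⋯(p^m - 1)). -/

import Mathlib

open AddSubgroup
/-- Every subgroup of ℤ equals zmultiples of its index. -/
lemma int_subgroup_eq (S : AddSubgroup ℤ) : S = zmultiples (S.index : ℤ) := by
  obtain ⟨a, rfl⟩ := Int.subgroup_cyclic S
  have h1 : AddSubgroup.closure ({a} : Set ℤ) = zmultiples a := by
    ext x; simp [AddSubgroup.mem_closure_singleton, mem_zmultiples_iff]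
  rw [h1, Int.index_zmultiples]
  rcases Int.natAbs_eq a with h | h
  · rw [← h]
  · rw [h]; simp
variable {B : Type*} [AddCommGroup B]

/-- The subgroup of ℤ × B generated by K (in the second factor) and (d, b). -/
def mkSub (d : ℤ) (b : B) (K : AddSubgroup B) : AddSubgroup (ℤ × B) where
  carrier := {z | ∃ k : ℤ, z.1 = k * d ∧ z.2 - k • b ∈ K}
  zero_mem' := ⟨0, by simp, by simpa using zero_mem K⟩
  add_mem' := by
    rintro ⟨x1, y1⟩ ⟨x2, y2⟩ ⟨k1, hk1, hy1⟩ ⟨k2, hk2, hy2⟩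
    refine ⟨k1 + k2, by simp only [Prod.fst_add]; simp at hk1 hk2; rw [hk1, hk2]; ring, ?_⟩
    have h : (x1, y1).2 + (x2, y2).2 - (k1 + k2) • b
        = ((x1, y1).2 - k1 • b) + ((x2, y2).2 - k2 • b) := by
      simp only [add_zsmul]; abel
    show (x1, y1).2 + (x2, y2).2 - (k1 + k2) • b ∈ K
    rw [h]; exact add_mem hy1 hy2
  neg_mem' := by
    rintro ⟨x, y⟩ ⟨k, hk, hy⟩
    refine ⟨-k, by simp only [Prod.fst_neg]; simp at hk; rw [hk]; ring, ?_⟩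
    have h : -(x, y).2 - (-k) • b = -((x, y).2 - k • b) := by
      simp only [neg_zsmul]; abel
    show -(x, y).2 - (-k) • b ∈ K
    rw [h]; exact neg_mem hy

lemma mem_mkSub {d : ℤ} {b : B} {K : AddSubgroup B} {z : ℤ × B} :
    z ∈ mkSub d b K ↔ ∃ k : ℤ, z.1 = k * d ∧ z.2 - k • b ∈ K := Iff.rfl

lemma mkSub_map_fst (d : ℤ) (b : B) (K : AddSubgroup B) :
    (mkSub d b K).map (AddMonoidHom.fst ℤ B) = zmultiples d := by
  ext x
  simp only [mem_map, mem_zmultiples_iff]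
  constructor
  · rintro ⟨⟨x', y⟩, ⟨k, hk, -⟩, rfl⟩; exact ⟨k, by simp at hk; simp [hk, mul_comm]⟩
  · rintro ⟨k, rfl⟩
    exact ⟨(k * d, k • b), ⟨k, rfl, by simpa using zero_mem K⟩, by simp [mul_comm]⟩

lemma mkSub_comap_inr (d : ℤ) (hd : d ≠ 0) (b : B) (K : AddSubgroup B) :
    (mkSub d b K).comap (AddMonoidHom.inr ℤ B) = K := by
  ext y
  simp only [mem_comap, mem_mkSub]
  constructor
  · rintro ⟨k, hk, hy⟩
    have hk0 : k = 0 := by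
      simp only [AddMonoidHom.inr_apply] at hk
      rcases mul_eq_zero.mp hk.symm with h | h
      · exact h
      · exact absurd h hd
    subst hk0; simpa using hy
  · intro hy; exact ⟨0, by simp, by simpa using hy⟩

lemma mem_mkSub_self (d : ℤ) (b : B) (K : AddSubgroup B) : (d, b) ∈ mkSub d b K :=
  ⟨1, by simp, by simpa using zero_mem K⟩

lemma mkSub_le (d : ℤ) (b : B) (K : AddSubgroup B) :
    mkSub d b K ≤ (zmultiples d).comap (AddMonoidHom.fst ℤ B) := by
  rintro ⟨x, y⟩ ⟨k, hk, -⟩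
  simp only [mem_comap, mem_zmultiples_iff]
  have hk' : x = k * d := hk
  exact ⟨k, show k • d = x by rw [hk']; simp [zsmul_eq_mul]⟩

/-- The quotient map from P := fst⁻¹(dℤ) to B ⧸ K. -/
noncomputable def psiHom (d : ℤ) (b : B) (K : AddSubgroup B) :
    ((zmultiples d).comap (AddMonoidHom.fst ℤ B)) →+ B ⧸ K where
  toFun z := QuotientAddGroup.mk (z.1.2 - (z.1.1 / d) • b)
  map_zero' := by simp
  map_add' := by
    rintro ⟨⟨x1, y1⟩, h1⟩ ⟨⟨x2, y2⟩, h2⟩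
    simp only [mem_comap, mem_zmultiples_iff] at h1 h2
    obtain ⟨k1, hk1⟩ := h1; obtain ⟨k2, hk2⟩ := h2
    have e1 : x1 = k1 * d := by have : k1 • d = x1 := hk1; rw [← this]; simp [zsmul_eq_mul]
    have e2 : x2 = k2 * d := by have : k2 • d = x2 := hk2; rw [← this]; simp [zsmul_eq_mul]
    rcases eq_or_ne d 0 with rfl | hd
    · subst e1 e2; simp
    · subst e1 e2
      have : (k1 * d + k2 * d) / d = k1 * d / d + k2 * d / d := by
        rw [Int.mul_ediv_cancel _ hd, Int.mul_ediv_cancel _ hd, ← add_mul,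
          Int.mul_ediv_cancel _ hd]
      show QuotientAddGroup.mk (y1 + y2 - ((k1 * d + k2 * d) / d) • b) = _
      rw [this]
      have : y1 + y2 - (k1 * d / d + k2 * d / d) • b
          = (y1 - (k1 * d / d) • b) + (y2 - (k2 * d / d) • b) := by
        rw [add_zsmul]; abel
      rw [this]
      rfl

lemma psiHom_surjective (d : ℤ) (b : B) (K : AddSubgroup B) :
    Function.Surjective (psiHom d b K) := by
  intro q
  obtain ⟨y, rfl⟩ := QuotientAddGroup.mk_surjective q
  refine ⟨⟨(0, y), by simp only [mem_comap, mem_zmultiples_iff]; exact ⟨0, by simp⟩⟩, ?_⟩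
  show QuotientAddGroup.mk (y - ((0:ℤ) / d) • b) = _
  simp

lemma psiHom_ker (d : ℤ) (hd : d ≠ 0) (b : B) (K : AddSubgroup B) :
    (psiHom d b K).ker = (mkSub d b K).addSubgroupOf
      ((zmultiples d).comap (AddMonoidHom.fst ℤ B)) := by
  ext ⟨⟨x, y⟩, h⟩
  simp only [mem_comap, mem_zmultiples_iff] at h
  obtain ⟨k, hk⟩ := h
  have e1 : x = k * d := by have : k • d = x := hk; rw [← this]; simp [zsmul_eq_mul]
  subst e1
  have hdiv : k * d / d = k := Int.mul_ediv_cancel _ hd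
  constructor
  · intro hker
    have : QuotientAddGroup.mk (y - (k * d / d) • b) = (0 : B ⧸ K) := hker
    rw [hdiv] at this
    have hyk : y - k • b ∈ K := (QuotientAddGroup.eq_zero_iff _).mp this
    exact ⟨k, rfl, hyk⟩
  · rintro ⟨k', hk', hy⟩
    have hk'' : k * d = k' * d := hk'
    have hkk : k' = k := mul_right_cancel₀ hd hk''.symm
    subst hkk
    show QuotientAddGroup.mk (y - (k' * d / d) • b) = (0 : B ⧸ K)
    rw [hdiv]
    exact (QuotientAddGroup.eq_zero_iff _).mpr hy

lemma mkSub_index (d : ℤ) (hd : d ≠ 0) (b : B) (K : AddSubgroup B) :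
    (mkSub d b K).index = K.index * d.natAbs := by
  have hle := mkSub_le d b K
  rw [← relIndex_mul_index hle]
  congr 1
  · -- relindex = K.index
    rw [relIndex, ← psiHom_ker d hd b K, index_ker]
    have : Nat.card (psiHom d b K).range = Nat.card (B ⧸ K) := by
      rw [AddMonoidHom.range_eq_top.mpr (psiHom_surjective d b K)]
      exact Nat.card_congr topEquiv.toEquiv
    rw [this, index_eq_card]
  · rw [index_comap_of_surjective _ Prod.fst_surjective, Int.index_zmultiples]

variable {B : Type*} [AddCommGroup B]

lemma mkSub_congr (d : ℤ) (b b' : B) (K : AddSubgroup B) (h : b - b' ∈ K) :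
    mkSub d b K = mkSub d b' K := by
  have key : ∀ (c c' : B), c - c' ∈ K → mkSub d c K ≤ mkSub d c' K := by
    intro c c' hcc
    rintro ⟨x, y⟩ ⟨k, hk, hy⟩
    refine ⟨k, hk, ?_⟩
    have : y - k • c' = (y - k • c) + k • (c - c') := by
      rw [smul_sub]; abel
    show y - k • c' ∈ K
    rw [this]
    exact add_mem hy (zsmul_mem hcc k)
  exact le_antisymm (key b b' h) (key b' b (by simpa using neg_mem h))

lemma mkSub_fst_index (d : ℕ) (b : B) (K : AddSubgroup B) :
    ((mkSub (d:ℤ) b K).map (AddMonoidHom.fst ℤ B)).index = d := by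
  rw [mkSub_map_fst, Int.index_zmultiples, Int.natAbs_natCast]

lemma mkSub_sub_mem (d : ℕ) (hd : d ≠ 0) (b b' : B) (K : AddSubgroup B)
    (h : ((d:ℤ), b') ∈ mkSub (d:ℤ) b K) : b' - b ∈ K := by
  obtain ⟨k, hk, hy⟩ := h
  have hk' : (1:ℤ) * d = k * d := by rw [one_mul]; exact hk
  have hk1 : k = 1 := (mul_right_cancel₀ (by exact_mod_cast hd) hk').symm
  subst hk1
  simpa using hy

lemma reconstruction (H : AddSubgroup (ℤ × B)) (d : ℕ)
    (hmap : H.map (AddMonoidHom.fst ℤ B) = zmultiples (d:ℤ)) (b : B)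
    (hb : ((d:ℤ), b) ∈ H) :
    H = mkSub (d:ℤ) b (H.comap (AddMonoidHom.inr ℤ B)) := by
  ext ⟨x, y⟩
  constructor
  · intro hxy
    have hx : x ∈ zmultiples (d:ℤ) := by
      rw [← hmap]; exact ⟨(x, y), hxy, rfl⟩
    obtain ⟨k, hk⟩ := mem_zmultiples_iff.mp hx
    refine ⟨k, by rw [← hk]; simp [zsmul_eq_mul], ?_⟩
    have h2 : (x, y) - k • ((d:ℤ), b) ∈ H := sub_mem hxy (zsmul_mem hb k)
    have h3 : (x, y) - k • ((d:ℤ), b) = ((0:ℤ), y - k • b) := by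
      have : x - k • (d:ℤ) = 0 := by rw [hk]; ring
      ext
      · simpa using this
      · simp
    rw [h3] at h2
    exact h2
  · rintro ⟨k, hk, hy⟩
    have hk' : x = k * d := hk
    have h1 : ((0:ℤ), y - k • b) ∈ H := hy
    have h2 : (x, y) = k • ((d:ℤ), b) + ((0:ℤ), y - k • b) := by
      ext
      · simp [hk', zsmul_eq_mul, mul_comm]
      · simp
    rw [h2]
    exact add_mem (zsmul_mem hb k) h1

/-- The main bijection. -/
noncomputable def mainEquiv (n : ℕ) (hn : n ≠ 0) :
    ((d : n.divisors) × (K : {K : AddSubgroup B // K.index = n / d}) × (B ⧸ K.1)) ≃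
      {H : AddSubgroup (ℤ × B) // H.index = n} := by
  refine Equiv.ofBijective
    (fun x => ⟨mkSub ((x.1 : ℕ) : ℤ) x.2.2.out x.2.1.1, ?_⟩) ⟨?_, ?_⟩
  · -- index is n
    obtain ⟨⟨d, hd⟩, ⟨K, hK⟩, v⟩ := x
    have hd0 : d ≠ 0 := Nat.pos_of_mem_divisors hd |>.ne'
    have hdvd : d ∣ n := (Nat.mem_divisors.mp hd).1
    rw [mkSub_index _ (by exact_mod_cast hd0) _ _, hK, Int.natAbs_natCast]
    exact Nat.div_mul_cancel hdvd
  · -- injective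
    rintro ⟨⟨d, hd⟩, ⟨K, hK⟩, v⟩ ⟨⟨d', hd'⟩, ⟨K', hK'⟩, v'⟩ hFF
    simp only [Subtype.mk.injEq] at hFF
    have hd0 : d ≠ 0 := Nat.pos_of_mem_divisors hd |>.ne'
    have hdd : d = d' := by
      have := congrArg (fun H => (AddSubgroup.map (AddMonoidHom.fst ℤ B) H).index) hFF
      simpa [mkSub_fst_index] using this
    subst hdd
    have hKK : K = K' := by
      have h0 : ((d:ℕ):ℤ) ≠ 0 := by exact_mod_cast hd0
      have := congrArg (fun H => AddSubgroup.comap (AddMonoidHom.inr ℤ B) H) hFF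
      simpa [mkSub_comap_inr _ h0] using this
    subst hKK
    have hvv : v = v' := by
      have hm : ((d:ℤ), v.out) ∈ mkSub (d:ℤ) v'.out K := by
        rw [← hFF]; exact mem_mkSub_self _ _ _
      have hsub := mkSub_sub_mem d hd0 _ _ K hm
      calc v = QuotientAddGroup.mk v.out := (QuotientAddGroup.out_eq' v).symm
        _ = QuotientAddGroup.mk v'.out := by
            rw [QuotientAddGroup.eq]
            have h2 := neg_mem hsub
            rwa [neg_sub, sub_eq_neg_add] at h2
        _ = v' := QuotientAddGroup.out_eq' v'
    subst hvv
    rfl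
  · -- surjective
    rintro ⟨H, hH⟩
    set d := (H.map (AddMonoidHom.fst ℤ B)).index with hd_def
    have hle : H ≤ (H.map (AddMonoidHom.fst ℤ B)).comap (AddMonoidHom.fst ℤ B) :=
      le_comap_map _ _
    have hcomap_idx : ((H.map (AddMonoidHom.fst ℤ B)).comap
        (AddMonoidHom.fst ℤ B)).index = d :=
      index_comap_of_surjective _ Prod.fst_surjective
    have hdvd : d ∣ n := by
      rw [← hH, ← hcomap_idx]; exact index_dvd_of_le hle
    have hd0 : d ≠ 0 := fun h => hn (Nat.eq_zero_of_zero_dvd (h ▸ hdvd))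
    have hmap : H.map (AddMonoidHom.fst ℤ B) = zmultiples ((d:ℕ) : ℤ) :=
      int_subgroup_eq _
    have hdmem : ((d:ℕ) : ℤ) ∈ H.map (AddMonoidHom.fst ℤ B) := by
      rw [hmap]; exact mem_zmultiples _
    obtain ⟨⟨x, b⟩, hbH, hx⟩ := hdmem
    have hx' : x = (d : ℤ) := hx
    subst hx'
    set K := H.comap (AddMonoidHom.inr ℤ B) with hK_def
    have hrec : H = mkSub (d:ℤ) b K := reconstruction H d hmap b hbH
    have hidx : K.index * d = n := by
      rw [← hH, hrec, mkSub_index _ (by exact_mod_cast hd0), Int.natAbs_natCast]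
    have hKidx : K.index = n / d := by
      rw [← hidx, Nat.mul_div_cancel _ (Nat.pos_of_ne_zero hd0)]
    refine ⟨⟨⟨d, Nat.mem_divisors.mpr ⟨hdvd, hn⟩⟩, ⟨K, hKidx⟩,
      QuotientAddGroup.mk b⟩, ?_⟩
    apply Subtype.ext
    show mkSub (d:ℤ) (QuotientAddGroup.mk (s := K) b).out K = H
    rw [hrec]
    -- mkSub with different representative of same coset
    have hout : ((QuotientAddGroup.mk (s := K) b).out) - b ∈ K := by
      have h1 : QuotientAddGroup.mk (s := K) ((QuotientAddGroup.mk (s := K) b).out)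
          = QuotientAddGroup.mk (s := K) b := QuotientAddGroup.out_eq' _
      have h2 := (QuotientAddGroup.eq (s := K)).mp h1
      have : (QuotientAddGroup.mk (s := K) b).out - b
          = -(-(QuotientAddGroup.mk (s := K) b).out + b) + 0 := by abel
      rw [this]
      exact add_mem (neg_mem h2) (zero_mem K)
    exact mkSub_congr _ _ _ _ hout

lemma nat_card_sigma {ι : Type*} [Fintype ι] (f : ι → Type*) [∀ i, Finite (f i)] :
    Nat.card (Σ i, f i) = ∑ i, Nat.card (f i) := by
  have : ∀ i, Fintype (f i) := fun i => Fintype.ofFinite _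
  classical
  simp [Nat.card_eq_fintype_card, Fintype.card_sigma]

variable {B : Type*} [AddCommGroup B]

lemma hdiv_aux {n : ℕ} (hn : n ≠ 0) (d : ↥n.divisors) : n / (d : ℕ) ≠ 0 := by
  have hd : (d:ℕ) ∣ n := (Nat.mem_divisors.mp d.2).1
  have hd0 : 0 < (d:ℕ) := Nat.pos_of_mem_divisors d.2
  exact (Nat.div_pos (Nat.le_of_dvd (Nat.pos_of_ne_zero hn) hd) hd0).ne'

lemma finite_index_subgroups_prod (n : ℕ) (hn : n ≠ 0)
    (hf : ∀ e : ℕ, e ≠ 0 → Finite {K : AddSubgroup B // K.index = e}) :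
    Finite {H : AddSubgroup (ℤ × B) // H.index = n} := by
  haveI h1 : ∀ d : ↥n.divisors, Finite {K : AddSubgroup B // K.index = n / (d:ℕ)} :=
    fun d => hf _ (hdiv_aux hn d)
  haveI h2 : ∀ (d : ↥n.divisors) (K : {K : AddSubgroup B // K.index = n / (d:ℕ)}),
      Finite (B ⧸ K.1) := by
    intro d K
    haveI : K.1.FiniteIndex := ⟨by rw [K.2]; exact hdiv_aux hn d⟩
    infer_instance
  exact Finite.of_equiv _ (mainEquiv (B := B) n hn)

lemma card_index_eq (n : ℕ) (hn : n ≠ 0)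
    (hf : ∀ e : ℕ, e ≠ 0 → Finite {K : AddSubgroup B // K.index = e}) :
    Nat.card {H : AddSubgroup (ℤ × B) // H.index = n} =
      ∑ d ∈ n.divisors, (n / d) * Nat.card {K : AddSubgroup B // K.index = n / d} := by
  classical
  rw [← Nat.card_congr (mainEquiv (B := B) n hn)]
  have hdiv : ∀ d : ↥n.divisors, n / (d : ℕ) ≠ 0 := fun d => hdiv_aux hn d
  haveI h1 : ∀ d : ↥n.divisors, Finite {K : AddSubgroup B // K.index = n / (d:ℕ)} :=
    fun d => hf _ (hdiv d)
  haveI hfin : ∀ (d : ↥n.divisors) (K : {K : AddSubgroup B // K.index = n / (d:ℕ)}),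
      Finite (B ⧸ K.1) := by
    intro d K
    haveI : K.1.FiniteIndex := ⟨by rw [K.2]; exact hdiv d⟩
    infer_instance
  rw [nat_card_sigma]
  rw [← Finset.sum_coe_sort n.divisors]
  refine Finset.sum_congr rfl ?_
  intro d _
  haveI : Fintype {K : AddSubgroup B // K.index = n / (d:ℕ)} := Fintype.ofFinite _
  rw [nat_card_sigma]
  have hcard : ∀ K : {K : AddSubgroup B // K.index = n / (d:ℕ)},
      Nat.card (B ⧸ K.1) = n / (d:ℕ) := by
    intro K
    rw [← index_eq_card, K.2]
  rw [Finset.sum_congr rfl fun K _ => hcard K, Finset.sum_const, Finset.card_univ,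
    smul_eq_mul, Nat.card_eq_fintype_card, mul_comm]

/-- Additive equivalence (Fin (ℓ+1) → ℤ) ≃+ ℤ × (Fin ℓ → ℤ). -/
def finSuccAddEquiv (ℓ : ℕ) : (Fin (ℓ + 1) → ℤ) ≃+ ℤ × (Fin ℓ → ℤ) :=
  { (Fin.consEquiv fun _ : Fin (ℓ + 1) => ℤ).symm with map_add' := fun _ _ => rfl }

/-- Transport of index-n subgroups along an AddEquiv. -/
def subgroupIndexEquiv {G G' : Type*} [AddGroup G] [AddGroup G'] (e : G ≃+ G') (n : ℕ) :
    {H : AddSubgroup G // H.index = n} ≃ {H : AddSubgroup G' // H.index = n} where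
  toFun H := ⟨H.1.comap e.symm.toAddMonoidHom, by
    rw [index_comap_of_surjective _ e.symm.surjective, H.2]⟩
  invFun H := ⟨H.1.comap e.toAddMonoidHom, by
    rw [index_comap_of_surjective _ e.surjective, H.2]⟩
  left_inv H := by
    apply Subtype.ext
    show comap e.toAddMonoidHom (comap e.symm.toAddMonoidHom H.1) = H.1
    rw [comap_comap]
    convert comap_id H.1
    ext x; simp
  right_inv H := by
    apply Subtype.ext
    show comap e.symm.toAddMonoidHom (comap e.toAddMonoidHom H.1) = H.1
    rw [comap_comap]
    convert comap_id H.1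
    ext x; simp


/-- Number of subgroups of `ℤ^ℓ` of index `n`. -/
noncomputable def g (ℓ n : ℕ) : ℕ := Nat.card {H : AddSubgroup (Fin ℓ → ℤ) // H.index = n}

/-- `N ℓ n = |Hom(ℤ^ℓ, S_n)| / n!`, the number of ℓ-tuples of pairwise
commuting permutations of `n` letters, divided by `n!`. -/
noncomputable def N (ℓ n : ℕ) : ℚ :=
  (Nat.card {π : Fin ℓ → Equiv.Perm (Fin n) // ∀ i j, Commute (π i) (π j)} : ℚ) / n.factorial

lemma finite_g (ℓ : ℕ) : ∀ e : ℕ, e ≠ 0 → Finite {K : AddSubgroup (Fin ℓ → ℤ) // K.index = e} := by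
  induction ℓ with
  | zero =>
    intro e he
    haveI : Subsingleton (AddSubgroup (Fin 0 → ℤ)) := by
      constructor; intro a b
      ext x
      have hx : x = 0 := Subsingleton.elim x 0
      rw [hx]
      exact iff_of_true (zero_mem a) (zero_mem b)
    exact Finite.of_subsingleton
  | succ ℓ ih =>
    intro e he
    haveI := finite_index_subgroups_prod (B := Fin ℓ → ℤ) e he ih
    exact Finite.of_equiv _ (subgroupIndexEquiv (finSuccAddEquiv ℓ) e).symm

lemma g_succ (ℓ n : ℕ) (hn : n ≠ 0) :
    g (ℓ + 1) n = ∑ d ∈ n.divisors, (n / d) * g ℓ (n / d) := by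
  unfold g
  rw [Nat.card_congr (subgroupIndexEquiv (finSuccAddEquiv ℓ) n)]
  exact card_index_eq n hn (finite_g ℓ)

def funUniqueAddEquiv : (Fin 1 → ℤ) ≃+ ℤ :=
  { Equiv.funUnique (Fin 1) ℤ with map_add' := fun _ _ => rfl }

lemma g_one (n : ℕ) (hn : n ≠ 0) : g 1 n = 1 := by
  unfold g
  rw [Nat.card_congr (subgroupIndexEquiv funUniqueAddEquiv n)]
  haveI : Unique {H : AddSubgroup ℤ // H.index = n} := by
    refine ⟨⟨⟨zmultiples (n : ℤ), by rw [Int.index_zmultiples, Int.natAbs_natCast]⟩⟩, ?_⟩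
    rintro ⟨H, hH⟩
    apply Subtype.ext
    show H = zmultiples (n : ℤ)
    rw [int_subgroup_eq H, hH]
  exact Nat.card_unique
section rat
variable {p : ℕ}

lemma pow_sub_one_ne (hp2 : 2 ≤ p) {j : ℕ} (hj : j ≠ 0) : ((p:ℚ)^j - 1) ≠ 0 := by
  have h1 : (1:ℚ) < (p:ℚ) := by exact_mod_cast hp2
  have : (1:ℚ) < (p:ℚ)^j := one_lt_pow₀ h1 hj
  linarith

lemma denom_ne (hp2 : 2 ≤ p) (m : ℕ) :
    (∏ i ∈ Finset.range m, ((p:ℚ)^(i+1) - 1)) ≠ 0 :=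
  Finset.prod_ne_zero_iff.mpr fun i _ => pow_sub_one_ne hp2 (Nat.succ_ne_zero i)

lemma gauss_identity (hp2 : 2 ≤ p) (ℓ m : ℕ) :
    ∑ k ∈ Finset.range (m+1), (p:ℚ)^k *
        ((∏ i ∈ Finset.range k, ((p:ℚ)^(ℓ+i) - 1)) /
          (∏ i ∈ Finset.range k, ((p:ℚ)^(i+1) - 1)))
      = (∏ i ∈ Finset.range m, ((p:ℚ)^(ℓ+1+i) - 1)) /
          (∏ i ∈ Finset.range m, ((p:ℚ)^(i+1) - 1)) := by
  induction m with
  | zero => simp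
  | succ m ih =>
    rw [Finset.sum_range_succ, ih]
    have hAnum : ∏ i ∈ Finset.range (m+1), ((p:ℚ)^(ℓ+i) - 1)
        = ((p:ℚ)^ℓ - 1) * ∏ i ∈ Finset.range m, ((p:ℚ)^(ℓ+1+i) - 1) := by
      rw [Finset.prod_range_succ', mul_comm]
      congr 1
      exact Finset.prod_congr rfl fun i _ => by rw [show ℓ + (i+1) = ℓ+1+i by omega]
    have hDden : ∏ i ∈ Finset.range (m+1), ((p:ℚ)^(i+1) - 1)
        = (∏ i ∈ Finset.range m, ((p:ℚ)^(i+1) - 1)) * ((p:ℚ)^(m+1) - 1) :=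
      Finset.prod_range_succ _ _
    have hAnum' : ∏ i ∈ Finset.range (m+1), ((p:ℚ)^(ℓ+1+i) - 1)
        = (∏ i ∈ Finset.range m, ((p:ℚ)^(ℓ+1+i) - 1)) * ((p:ℚ)^(ℓ+1+m) - 1) :=
      Finset.prod_range_succ _ _
    rw [hAnum, hDden, hAnum']
    have hD := denom_ne hp2 m
    have h1 := pow_sub_one_ne hp2 (Nat.succ_ne_zero m)
    field_simp
    ring
end rat
lemma g_rec_pow (ℓ p : ℕ) (hp : p.Prime) (m : ℕ) :
    g (ℓ+1) (p^m) = ∑ k ∈ Finset.range (m+1), p^k * g ℓ (p^k) := by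
  rw [g_succ ℓ _ (pow_ne_zero m hp.pos.ne'), Nat.sum_divisors_prime_pow hp]
  have h : ∀ i ∈ Finset.range (m+1),
      (p^m / p^i) * g ℓ (p^m / p^i) = p^(m-i) * g ℓ (p^(m-i)) := by
    intro i hi
    rw [Nat.pow_div (by simpa using Nat.lt_succ_iff.mp (Finset.mem_range.mp hi)) hp.pos]
  rw [Finset.sum_congr rfl h]
  have hrefl := Finset.sum_range_reflect (fun k => p^k * g ℓ (p^k)) (m+1)
  simpa using hrefl

theorem g_prime_pow (ℓ : ℕ) (hℓ : 1 ≤ ℓ) (p : ℕ) (hp : p.Prime) (m : ℕ) (hm : 1 ≤ m) :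
    (g ℓ (p ^ m) : ℚ) =
      (∏ i ∈ Finset.range m, ((p : ℚ) ^ (ℓ + i) - 1)) /
        ∏ i ∈ Finset.range m, ((p : ℚ) ^ (i + 1) - 1) := by
  clear hm
  induction ℓ, hℓ using Nat.le_induction generalizing m with
  | base =>
    rw [g_one _ (pow_ne_zero m hp.pos.ne')]
    have : ∏ i ∈ Finset.range m, ((p : ℚ) ^ (1 + i) - 1)
        = ∏ i ∈ Finset.range m, ((p : ℚ) ^ (i + 1) - 1) :=
      Finset.prod_congr rfl fun i _ => by rw [add_comm]
    rw [this, div_self (denom_ne hp.two_le m)]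
    norm_num
  | succ ℓ hℓ ih =>
    rw [g_rec_pow ℓ p hp m]
    push_cast
    rw [Finset.sum_congr rfl fun k _ => by rw [ih k]]
    exact gauss_identity hp.two_le ℓ m
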